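/- Fix q_1 in (0,1), q_j > 0, and h_0 > 0. With w_h^{(j)}(y) = q_j e^{-y^2/2} / (q_1 e^{-(y-h)^2/2} + (1-q_1) e^{-y^2/2}) for j != 1 (the posterior weight of a null arm), and Y_h having mixture density (1-q_1) phi(y) + q_1 phi(y - h), it holds that lim_{h -> 0} (1/h) E[w_h^{(j)}(Y_h) Y_h] = 0; i.e., E[w_h^{(j)}(Y_h) Y_h] = o(h) as h -> 0. -/
import Mathlib

open MeasureTheory Filter Topology

/-- Standard normal density. -/
noncomputable def stdNormalPDF (y : ℝ) : ℝ :=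
  Real.exp (-(y ^ 2) / 2) / Real.sqrt (2 * Real.pi)

/-- Density of the two-component Gaussian mixture `(1-q₁) N(0,1) + q₁ N(h,1)`. -/
noncomputable def mixPDF (q1 h y : ℝ) : ℝ :=
  (1 - q1) * stdNormalPDF y + q1 * stdNormalPDF (y - h)

/-- Posterior weight `w_h^{(j)}` of a null arm `j ≠ 1` with prior weight `qj`. -/
noncomputable def postWnull (q1 qj h y : ℝ) : ℝ :=
  qj * Real.exp (-(y ^ 2) / 2) /
    (q1 * Real.exp (-((y - h) ^ 2) / 2) + (1 - q1) * Real.exp (-(y ^ 2) / 2))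

lemma odd_integral_zero (f : ℝ → ℝ) (hf : ∀ x, f (-x) = -f x) : ∫ x, f x = 0 := by
  have h1 : (∫ x, f (-x)) = ∫ x, f x := by
    have A : MeasurableEmbedding fun x : ℝ => -x :=
      (Homeomorph.neg ℝ).isClosedEmbedding.measurableEmbedding
    rw [← A.integral_map, Measure.map_neg_eq_self (volume : Measure ℝ)]
  have h2 : (∫ x, f (-x)) = -∫ x, f x := by
    simp_rw [hf]; exact integral_neg f
  linarith [h1, h2.symm.trans h1]

/-- For a null arm `j ≠ 1`, `E[w_h^{(j)}(Y_h) Y_h] = o(h)` as `h → 0⁺`,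
i.e. `lim_{h → 0⁺} (1/h) E[w_h^{(j)}(Y_h) Y_h] = 0`. -/
theorem limit_null_arm_first_moment
    (q1 qj : ℝ) (hq1 : q1 ∈ Set.Ioo (0 : ℝ) 1) (hqj : 0 < qj) (h0 : ℝ) (hh0 : 0 < h0) :
    Tendsto (fun h : ℝ => (1 / h) * ∫ y, postWnull q1 qj h y * y * mixPDF q1 h y)
      (𝓝[>] (0 : ℝ)) (𝓝 0) := by
  obtain ⟨hq1pos, hq1lt⟩ := hq1
  have key : ∀ h : ℝ, (∫ y, postWnull q1 qj h y * y * mixPDF q1 h y) = 0 := by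
    intro h
    have heq : ∀ y : ℝ, postWnull q1 qj h y * y * mixPDF q1 h y
        = qj * (y * stdNormalPDF y) := by
      intro y
      have hD : 0 < q1 * Real.exp (-((y - h) ^ 2) / 2)
          + (1 - q1) * Real.exp (-(y ^ 2) / 2) := by
        have := Real.exp_pos (-((y - h) ^ 2) / 2)
        have := Real.exp_pos (-(y ^ 2) / 2)
        nlinarith
      have hs : (0:ℝ) < Real.sqrt (2 * Real.pi) :=
        Real.sqrt_pos.mpr (by positivity)
      unfold postWnull mixPDF stdNormalPDF
      field_simp
      ring
    simp_rw [heq]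
    rw [integral_const_mul]
    have : (∫ y : ℝ, y * stdNormalPDF y) = 0 := by
      apply odd_integral_zero
      intro x
      unfold stdNormalPDF
      simp [neg_pow]
    rw [this, mul_zero]
  simp_rw [key, mul_zero]
  exact tendsto_const_nhds
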